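/- arXiv:1301.4317 — 3 statements merged into one kernel-verified Lean document; each statement's English description precedes it below -/
import Mathlib

section
/- Define G₁ as the quadratic expression in Pauli expectation values from Eq. (2) (G₁ equals C²_{1|23}). A three-qubit pure state |ψ⟩ is a product state across the bipartition 1|23 (i.e., |ψ⟩ = |φ₁⟩ ⊗ |φ₂₃⟩) if and only if ⟨G₁⟩_{|ψ⟩⟨ψ|} = 0. -/
open scoped ComplexConjugate
open Finset

abbrev Q3 := Fin 2 × Fin 2 × Fin 2

/-- Pauli matrices σ₁, σ₂, σ₃. -/
noncomputable def pσ1 : Matrix (Fin 2) (Fin 2) ℂ := !![0, 1; 1, 0]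
noncomputable def pσ2 : Matrix (Fin 2) (Fin 2) ℂ := !![0, -Complex.I; Complex.I, 0]
noncomputable def pσ3 : Matrix (Fin 2) (Fin 2) ℂ := !![1, 0; 0, -1]
noncomputable def I2 : Matrix (Fin 2) (Fin 2) ℂ := 1

/-- Threefold tensor product operator `X ⊗ Y ⊗ Z` on `ℂ² ⊗ ℂ² ⊗ ℂ²`. -/
noncomputable def op3 (X Y Z : Matrix (Fin 2) (Fin 2) ℂ) : Matrix Q3 Q3 ℂ :=
  Matrix.of fun p q => X p.1 q.1 * Y p.2.1 q.2.1 * Z p.2.2 q.2.2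

/-- Expectation value `⟨ψ|X|ψ⟩` (real part). -/
noncomputable def expec (ψ : Q3 → ℂ) (X : Matrix Q3 Q3 ℂ) : ℝ :=
  (∑ p, ∑ q, conj (ψ p) * X p q * ψ q).re

/-- Reduced density matrix on the first qubit. -/
noncomputable def rho1 (ψ : Q3 → ℂ) : Matrix (Fin 2) (Fin 2) ℂ :=
  Matrix.of fun i i' => ∑ j, ∑ k, ψ (i, j, k) * conj (ψ (i', j, k))

/-- The quadratic Pauli-expectation expression `⟨G₁⟩` of Eq. (2). -/
noncomputable def G1 (ψ : Q3 → ℂ) : ℝ :=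
  (1 / 16) * (3
    - expec ψ (op3 I2 I2 pσ3) ^ 2 - expec ψ (op3 I2 pσ3 I2) ^ 2
    - 3 * expec ψ (op3 pσ3 I2 I2) ^ 2
    + expec ψ (op3 pσ3 pσ3 I2) ^ 2 + expec ψ (op3 pσ3 I2 pσ3) ^ 2
    - expec ψ (op3 I2 pσ3 pσ3) ^ 2 + expec ψ (op3 pσ3 pσ3 pσ3) ^ 2
    - 3 * expec ψ (op3 pσ1 I2 I2) ^ 2 + expec ψ (op3 pσ1 I2 pσ3) ^ 2
    + expec ψ (op3 pσ1 pσ3 I2) ^ 2 + expec ψ (op3 pσ1 pσ3 pσ3) ^ 2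
    - 3 * expec ψ (op3 pσ2 I2 I2) ^ 2 + expec ψ (op3 pσ2 I2 pσ3) ^ 2
    + expec ψ (op3 pσ2 pσ3 I2) ^ 2 + expec ψ (op3 pσ2 pσ3 pσ3) ^ 2)

set_option maxHeartbeats 4000000 in
lemma keyid (ψ : Q3 → ℂ) :
    (3 * (∑ p, Complex.normSq (ψ p)) ^ 2
    - expec ψ (op3 I2 I2 pσ3) ^ 2 - expec ψ (op3 I2 pσ3 I2) ^ 2
    - 3 * expec ψ (op3 pσ3 I2 I2) ^ 2
    + expec ψ (op3 pσ3 pσ3 I2) ^ 2 + expec ψ (op3 pσ3 I2 pσ3) ^ 2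
    - expec ψ (op3 I2 pσ3 pσ3) ^ 2 + expec ψ (op3 pσ3 pσ3 pσ3) ^ 2
    - 3 * expec ψ (op3 pσ1 I2 I2) ^ 2 + expec ψ (op3 pσ1 I2 pσ3) ^ 2
    + expec ψ (op3 pσ1 pσ3 I2) ^ 2 + expec ψ (op3 pσ1 pσ3 pσ3) ^ 2
    - 3 * expec ψ (op3 pσ2 I2 I2) ^ 2 + expec ψ (op3 pσ2 I2 pσ3) ^ 2
    + expec ψ (op3 pσ2 pσ3 I2) ^ 2 + expec ψ (op3 pσ2 pσ3 pσ3) ^ 2)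
    = 8 * ∑ j, ∑ k, ∑ j', ∑ k', Complex.normSq
        (ψ (0, j, k) * ψ (1, j', k') - ψ (0, j', k') * ψ (1, j, k)) := by
  simp only [expec, op3, pσ1, pσ2, pσ3, I2, Matrix.one_apply, Fintype.sum_prod_type,
    Fin.sum_univ_two, Matrix.of_apply, Matrix.cons_val', Matrix.cons_val_zero,
    Matrix.cons_val_one, Matrix.head_cons, Matrix.empty_val', Matrix.cons_val_fin_one,
    Matrix.head_fin_const, Prod.mk.injEq]
  norm_num
  simp only [Complex.normSq_apply, Complex.add_re, Complex.mul_re,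
    Complex.sub_re, Complex.sub_im, Complex.mul_im, Complex.add_im, Complex.I_re,
    Complex.I_im, Complex.neg_re, Complex.neg_im, Complex.one_re, Complex.one_im,
    Complex.zero_re, Complex.zero_im, Complex.conj_re, Complex.conj_im]
  ring


theorem stmt4 (ψ : Q3 → ℂ) (hψ : ∑ p, Complex.normSq (ψ p) = 1) :
    (∃ (φ1 : Fin 2 → ℂ) (φ23 : Fin 2 → Fin 2 → ℂ),
        ∀ i j k, ψ (i, j, k) = φ1 i * φ23 j k) ↔ G1 ψ = 0 := by
  have hkey := keyid ψ
  rw [hψ, one_pow, mul_one] at hkey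
  have hG : G1 ψ = (1 / 2) * ∑ j, ∑ k, ∑ j', ∑ k', Complex.normSq
      (ψ (0, j, k) * ψ (1, j', k') - ψ (0, j', k') * ψ (1, j, k)) := by
    unfold G1; linarith
  constructor
  · rintro ⟨φ1, φ23, h⟩
    rw [hG]
    have hz : ∀ j k j' k' : Fin 2,
        ψ (0, j, k) * ψ (1, j', k') - ψ (0, j', k') * ψ (1, j, k) = 0 := by
      intro j k j' k'; rw [h, h, h, h]; ring
    simp [hz]
  · intro h0
    rw [hG] at h0
    have step : ∀ (g : Fin 2 → ℝ), (∀ x, 0 ≤ g x) → ∑ x, g x = 0 → ∀ x, g x = 0 := by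
      intro g hg hs x
      exact (Finset.sum_eq_zero_iff_of_nonneg (fun y _ => hg y)).mp hs x (mem_univ x)
    have hminor : ∀ j k j' k' : Fin 2,
        ψ (0, j, k) * ψ (1, j', k') = ψ (0, j', k') * ψ (1, j, k) := by
      have hsum : (∑ j, ∑ k, ∑ j', ∑ k', Complex.normSq
          (ψ (0, j, k) * ψ (1, j', k') - ψ (0, j', k') * ψ (1, j, k))) = 0 := by linarith
      intro j k j' k'
      have h1 := step _ (fun _ => Finset.sum_nonneg fun _ _ => Finset.sum_nonneg fun _ _ =>
        Finset.sum_nonneg fun _ _ => Complex.normSq_nonneg _) hsum j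
      have h2 := step _ (fun _ => Finset.sum_nonneg fun _ _ =>
        Finset.sum_nonneg fun _ _ => Complex.normSq_nonneg _) h1 k
      have h3 := step _ (fun _ => Finset.sum_nonneg fun _ _ => Complex.normSq_nonneg _) h2 j'
      have h4 := step _ (fun _ => Complex.normSq_nonneg _) h3 k'
      have := Complex.normSq_eq_zero.mp h4
      linear_combination this
    by_cases hz : ∀ j k, ψ (0, j, k) = 0
    · exact ⟨![0, 1], fun j k => ψ (1, j, k), by
        intro i j k; fin_cases i <;> simp [hz]⟩
    · push_neg at hz
      obtain ⟨j0, k0, h0'⟩ := hz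
      refine ⟨![1, ψ (1, j0, k0) / ψ (0, j0, k0)], fun j k => ψ (0, j, k), ?_⟩
      intro i j k
      fin_cases i
      · simp
      · simp only [Fin.mk_one, Matrix.cons_val_one, Matrix.head_cons, Matrix.cons_val_zero]
        field_simp
        linear_combination hminor j0 k0 j k
end

section
/- If a three-qubit pure state |ψ⟩ factors across the bipartition 1|23 and also across the bipartition 2|13, then it factors across the bipartition 12|3 as well (and hence is fully separable). -/
open scoped ComplexConjugate
open Finset

/-- `ψ` factors across the bipartition 1|23. -/
def Sep1 (ψ : Q3 → ℂ) : Prop :=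
  ∃ (φ : Fin 2 → ℂ) (χ : Fin 2 → Fin 2 → ℂ), ∀ i j k, ψ (i, j, k) = φ i * χ j k

/-- `ψ` factors across the bipartition 2|13. -/
def Sep2 (ψ : Q3 → ℂ) : Prop :=
  ∃ (φ : Fin 2 → ℂ) (χ : Fin 2 → Fin 2 → ℂ), ∀ i j k, ψ (i, j, k) = φ j * χ i k

/-- `ψ` factors across the bipartition 12|3. -/
def Sep3 (ψ : Q3 → ℂ) : Prop :=
  ∃ (χ : Fin 2 → Fin 2 → ℂ) (φ : Fin 2 → ℂ), ∀ i j k, ψ (i, j, k) = χ i j * φ k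

theorem stmt6 (ψ : Q3 → ℂ) (hψ : ∑ p, Complex.normSq (ψ p) = 1)
    (h1 : Sep1 ψ) (h2 : Sep2 ψ) :
    Sep3 ψ ∧ ∃ (φ1 φ2 φ3 : Fin 2 → ℂ), ∀ i j k, ψ (i, j, k) = φ1 i * φ2 j * φ3 k := by
  obtain ⟨φ1, χ1, h1⟩ := h1
  obtain ⟨φ2, χ2, h2⟩ := h2
  have hne : ∃ p : Q3, ψ p ≠ 0 := by
    by_contra h
    push_neg at h
    simp [h] at hψ
  obtain ⟨⟨i0, j0, k0⟩, hp⟩ := hne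
  have hφ1 : φ1 i0 ≠ 0 := by
    intro h
    exact hp (by rw [h1, h]; ring)
  have hχ : ∀ j k, φ1 i0 * χ1 j k = φ2 j * χ2 i0 k := fun j k => by rw [← h1, h2]
  have hχ1 : ∀ j k, χ1 j k * χ1 j0 k0 = χ1 j k0 * χ1 j0 k := by
    intro j k
    have h := mul_left_cancel₀ (mul_ne_zero hφ1 hφ1) (by
      calc φ1 i0 * φ1 i0 * (χ1 j k * χ1 j0 k0)
          = (φ1 i0 * χ1 j k) * (φ1 i0 * χ1 j0 k0) := by ring
        _ = (φ2 j * χ2 i0 k) * (φ2 j0 * χ2 i0 k0) := by rw [hχ, hχ]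
        _ = (φ2 j * χ2 i0 k0) * (φ2 j0 * χ2 i0 k) := by ring
        _ = (φ1 i0 * χ1 j k0) * (φ1 i0 * χ1 j0 k) := by rw [hχ, hχ]
        _ = φ1 i0 * φ1 i0 * (χ1 j k0 * χ1 j0 k) := by ring)
    exact h
  have key : ∀ i j k, ψ (i, j, k) * ψ (i0, j0, k0) = ψ (i, j, k0) * ψ (i0, j0, k) := by
    intro i j k
    rw [h1 i j k, h1 i0 j0 k0, h1 i j k0, h1 i0 j0 k]
    calc φ1 i * χ1 j k * (φ1 i0 * χ1 j0 k0)
        = φ1 i * φ1 i0 * (χ1 j k * χ1 j0 k0) := by ring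
      _ = φ1 i * φ1 i0 * (χ1 j k0 * χ1 j0 k) := by rw [hχ1]
      _ = φ1 i * χ1 j k0 * (φ1 i0 * χ1 j0 k) := by ring
  refine ⟨⟨fun i j => ψ (i, j, k0) * (ψ (i0, j0, k0))⁻¹, fun k => ψ (i0, j0, k), ?_⟩,
    φ1, fun j => (φ1 i0)⁻¹ * χ1 j k0 * (χ1 j0 k0)⁻¹, fun k => φ1 i0 * χ1 j0 k, ?_⟩
  · intro i j k
    field_simp
    linear_combination key i j k
  · intro i j k
    have hχ0 : χ1 j0 k0 ≠ 0 := by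
      intro h
      exact hp (by rw [h1, h]; ring)
    rw [h1 i j k]
    field_simp
    linear_combination φ1 i * hχ1 j k
end

section
/- If nonnegative reals a_i and real numbers b_i, c_i satisfy a_i² ≥ b_i² + c_i² + x for each i = 1,…,n, where x ≥ 0 is fixed, then for any convex weights p_i (p_i ≥ 0, Σ p_i = 1) one has (Σ p_i a_i)² ≥ (Σ p_i b_i)² + (Σ p_i c_i)² + x. -/
open Finset

theorem stmt13 (n : ℕ) (a b c p : Fin n → ℝ) (x : ℝ)
    (ha : ∀ i, 0 ≤ a i) (hx : 0 ≤ x)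
    (h : ∀ i, a i ^ 2 ≥ b i ^ 2 + c i ^ 2 + x)
    (hp : ∀ i, 0 ≤ p i) (hps : ∑ i, p i = 1) :
    (∑ i, p i * a i) ^ 2 ≥ (∑ i, p i * b i) ^ 2 + (∑ i, p i * c i) ^ 2 + x := by
  set s : ℝ := Real.sqrt x with hs
  have hs2 : s ^ 2 = x := Real.sq_sqrt hx
  -- vectors in Euclidean space
  set u : Fin n → EuclideanSpace ℝ (Fin 3) :=
    fun i => (WithLp.equiv 2 (Fin 3 → ℝ)).symm ![b i, c i, s] with hu
  have hnorm : ∀ i, ‖u i‖ ≤ a i := by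
    intro i
    have hn : ‖u i‖ = Real.sqrt (b i ^ 2 + c i ^ 2 + x) := by
      rw [EuclideanSpace.norm_eq]
      congr 1
      simp [hu, Fin.sum_univ_three, sq_abs, hs2, ← hs]
    rw [hn]
    rw [show a i = Real.sqrt (a i ^ 2) by rw [Real.sqrt_sq (ha i)]]
    exact Real.sqrt_le_sqrt (h i)
  set v : EuclideanSpace ℝ (Fin 3) := ∑ i, p i • u i with hv
  have hvle : ‖v‖ ≤ ∑ i, p i * a i := by
    calc ‖v‖ ≤ ∑ i, ‖p i • u i‖ := norm_sum_le _ _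
      _ = ∑ i, p i * ‖u i‖ := by
          refine Finset.sum_congr rfl fun i _ => ?_
          rw [norm_smul, Real.norm_eq_abs, abs_of_nonneg (hp i)]
      _ ≤ ∑ i, p i * a i :=
          Finset.sum_le_sum fun i _ => mul_le_mul_of_nonneg_left (hnorm i) (hp i)
  have hvsq : ‖v‖ ^ 2 = (∑ i, p i * b i) ^ 2 + (∑ i, p i * c i) ^ 2 + x := by
    have happ : ∀ j, v j = ∑ i, (p i • u i) j := fun j => by rw [WithLp.ofLp_sum]; exact Finset.sum_apply j univ _
    have h0 : v 0 = ∑ i, p i * b i := by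
      rw [happ]; simp [hu, PiLp.smul_apply]
    have h1 : v 1 = ∑ i, p i * c i := by
      rw [happ]; simp [hu, PiLp.smul_apply]
    have h2 : v 2 = s := by
      rw [happ]; simp [hu, PiLp.smul_apply, ← Finset.sum_mul, hps]
    rw [EuclideanSpace.norm_eq, Real.sq_sqrt (by positivity)]
    rw [Fin.sum_univ_three, h0, h1, h2]
    simp [sq_abs, hs2]
  have := pow_le_pow_left₀ (norm_nonneg v) hvle 2
  rw [hvsq] at this
  linarith
end
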